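/- For even nonnegative integer m and A > 0, the polynomial z ↦ L_m^{-2(1+m+A)}(-z) has no zeros on [0, ∞); consequently the factorization function φ(x) = e^{(m+A+1)x + e^{-x}/2}·L_m^{-2(1+m+A)}(-e^{-x}) is nonvanishing on ℝ. -/

import Mathlib

/-- The generalized Laguerre polynomial L_m^α(x) = ∑_{k=0}^m (-1)^k/(k!(m-k)!) · (∏_{j=k+1}^m (α+j)) · x^k. -/
noncomputable def genLaguerre (m : ℕ) (α : ℝ) (x : ℝ) : ℝ :=
  ∑ k ∈ Finset.range (m + 1),
    ((-1 : ℝ) ^ k / ((Nat.factorial k : ℝ) * (Nat.factorial (m - k) : ℝ)))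
      * (∏ j ∈ Finset.Icc (k + 1) m, (α + (j : ℝ))) * x ^ k

open MeasureTheory Set

/-- Γ(B-k) = Γ(B-m) ∏_{j=k+1}^m (B-j) for k ≤ m < B. -/
lemma gamma_prod_aux (m : ℕ) : ∀ k ≤ m, ∀ B : ℝ, (m : ℝ) < B →
    Real.Gamma (B - k) = Real.Gamma (B - m) * ∏ j ∈ Finset.Icc (k + 1) m, (B - (j : ℝ)) := by
  induction m with
  | zero => intro k hk B hB; interval_cases k; simp
  | succ n ih =>
    intro k hk B hB
    rcases eq_or_lt_of_le hk with h | h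
    · subst h; simp
    · have hk' : k ≤ n := Nat.lt_succ_iff.mp h
      have hB' : (n : ℝ) < B := by push_cast at hB ⊢; linarith
      have hx : (0 : ℝ) < B - ((n : ℝ) + 1) := by push_cast at hB; linarith
      have hG : Real.Gamma (B - n) = (B - ((n : ℝ) + 1)) * Real.Gamma (B - ((n : ℝ) + 1)) := by
        have := Real.Gamma_add_one hx.ne'
        rw [show B - ((n : ℝ) + 1) + 1 = B - n by ring] at this
        exact this
      rw [Finset.prod_Icc_succ_top (by omega : k + 1 ≤ n + 1)]
      have := ih k hk' B hB'
      push_cast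
      push_cast at this hG
      rw [this, hG]
      ring

/-- The key positivity: for even m and B > m+1, the sum ∑ C(m,k)(-z)^k Γ(B-k) is positive
for z ≥ 0 (it equals ∫_0^∞ t^{B-m-1}(t-z)^m e^{-t} dt). -/
lemma key_sum_pos (m : ℕ) (hm : Even m) (B : ℝ) (hB : (m : ℝ) + 1 < B) (z : ℝ) (hz : 0 ≤ z) :
    0 < ∑ k ∈ Finset.range (m + 1), (m.choose k : ℝ) * (-z) ^ k * Real.Gamma (B - k) := by
  set f : ℝ → ℝ := fun t => t ^ (B - (m : ℝ) - 1) * (t - z) ^ m * Real.exp (-t) with hf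
  have hBk : ∀ k ∈ Finset.range (m + 1), (0 : ℝ) < B - k := by
    intro k hk
    have : k ≤ m := Nat.lt_succ_iff.mp (Finset.mem_range.mp hk)
    have : (k : ℝ) ≤ m := by exact_mod_cast this
    linarith
  have hik : ∀ k ∈ Finset.range (m + 1), IntegrableOn
      (fun t => (m.choose k : ℝ) * (-z) ^ k * (Real.exp (-t) * t ^ (B - (k : ℝ) - 1)))
      (Ioi 0) volume := by
    intro k hk
    exact (Real.GammaIntegral_convergent (hBk k hk)).const_mul _
  have hfeq : ∀ t ∈ Ioi (0 : ℝ), f t = ∑ k ∈ Finset.range (m + 1),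
      (m.choose k : ℝ) * (-z) ^ k * (Real.exp (-t) * t ^ (B - (k : ℝ) - 1)) := by
    intro t ht
    have ht' : (0 : ℝ) < t := ht
    have hexp : (t - z) ^ m = ∑ k ∈ Finset.range (m + 1),
        (-z) ^ k * t ^ (m - k) * (m.choose k : ℝ) := by
      rw [show t - z = -z + t by ring, add_pow]
    rw [hf]
    simp only [hexp, Finset.sum_mul, Finset.mul_sum]
    refine Finset.sum_congr rfl fun k hk => ?_
    have hkm : k ≤ m := Nat.lt_succ_iff.mp (Finset.mem_range.mp hk)
    have hpow : t ^ (B - (m : ℝ) - 1) * t ^ (m - k) = t ^ (B - (k : ℝ) - 1) := by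
      rw [← Real.rpow_natCast t (m - k), ← Real.rpow_add ht']
      congr 1
      have : ((m - k : ℕ) : ℝ) = (m : ℝ) - k := by
        rw [Nat.cast_sub hkm]
      rw [this]; ring
    calc t ^ (B - (m : ℝ) - 1) * ((-z) ^ k * t ^ (m - k) * (m.choose k : ℝ)) * Real.exp (-t)
        = (m.choose k : ℝ) * (-z) ^ k * (Real.exp (-t) * (t ^ (B - (m : ℝ) - 1) * t ^ (m - k))) := by
          ring
      _ = _ := by rw [hpow]
  have hint : IntegrableOn f (Ioi 0) volume := by
    refine (integrable_finset_sum _ hik).congr ?_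
    filter_upwards [ae_restrict_mem measurableSet_Ioi] with t ht
    exact (hfeq t ht).symm
  have h1 : ∫ t in Ioi (0 : ℝ), f t = ∑ k ∈ Finset.range (m + 1),
      (m.choose k : ℝ) * (-z) ^ k * Real.Gamma (B - k) := by
    rw [setIntegral_congr_fun measurableSet_Ioi hfeq, integral_finset_sum _ hik]
    refine Finset.sum_congr rfl fun k hk => ?_
    rw [MeasureTheory.integral_const_mul, Real.Gamma_eq_integral (hBk k hk)]
  have h2 : 0 < ∫ t in Ioi (0 : ℝ), f t := by
    rw [setIntegral_pos_iff_support_of_nonneg_ae ?_ hint]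
    · refine lt_of_lt_of_le ?_ (measure_mono (?_ : Ioo (z + 1) (z + 2) ⊆ Function.support f ∩ Ioi 0))
      · rw [Real.volume_Ioo]
        norm_num
      · intro t htm
        obtain ⟨ht1, ht2⟩ := htm
        have ht0 : (0 : ℝ) < t := by linarith
        have htz : (0 : ℝ) < t - z := by linarith
        constructor
        · simp only [Function.mem_support, hf]
          positivity
        · exact ht0
    · filter_upwards [ae_restrict_mem measurableSet_Ioi] with t ht
      have ht0 : (0 : ℝ) < t := ht
      have h1 : (0 : ℝ) ≤ t ^ (B - (m : ℝ) - 1) := Real.rpow_nonneg ht0.le _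
      have h2 : (0 : ℝ) ≤ (t - z) ^ m := hm.pow_nonneg _
      have h3 : (0 : ℝ) ≤ Real.exp (-t) := (Real.exp_pos _).le
      exact mul_nonneg (mul_nonneg h1 h2) h3
  rw [← h1]; exact h2

lemma genLaguerre_neg_pos (m : ℕ) (hm : Even m) (B : ℝ) (hB : (m : ℝ) + 1 < B)
    (z : ℝ) (hz : 0 ≤ z) : 0 < genLaguerre m (-B) (-z) := by
  have hBm : (m : ℝ) < B := by linarith
  have hGam : 0 < Real.Gamma (B - m) := Real.Gamma_pos_of_pos (by linarith)
  have hfac : (0 : ℝ) < (m.factorial : ℝ) := by exact_mod_cast m.factorial_pos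
  have key : (m.factorial : ℝ) * Real.Gamma (B - m) * genLaguerre m (-B) (-z)
      = ∑ k ∈ Finset.range (m + 1), (m.choose k : ℝ) * (-z) ^ k * Real.Gamma (B - k) := by
    rw [genLaguerre, Finset.mul_sum]
    refine Finset.sum_congr rfl fun k hk => ?_
    have hkm : k ≤ m := Nat.lt_succ_iff.mp (Finset.mem_range.mp hk)
    have hprodneg : ∏ j ∈ Finset.Icc (k + 1) m, (-B + (j : ℝ))
        = (-1 : ℝ) ^ (m - k) * ∏ j ∈ Finset.Icc (k + 1) m, (B - (j : ℝ)) := by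
      calc ∏ j ∈ Finset.Icc (k + 1) m, (-B + (j : ℝ))
          = ∏ j ∈ Finset.Icc (k + 1) m, ((-1 : ℝ) * (B - (j : ℝ))) :=
            Finset.prod_congr rfl (fun j _ => by ring)
        _ = (∏ _j ∈ Finset.Icc (k + 1) m, (-1 : ℝ)) * ∏ j ∈ Finset.Icc (k + 1) m, (B - (j : ℝ)) :=
            Finset.prod_mul_distrib
        _ = _ := by
            rw [Finset.prod_const, Nat.card_Icc]
            congr 2
            omega
    have hGk : Real.Gamma (B - k) = Real.Gamma (B - m) * ∏ j ∈ Finset.Icc (k + 1) m, (B - (j : ℝ)) :=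
      gamma_prod_aux m k hkm B hBm
    have hsign : (-1 : ℝ) ^ k * (-1 : ℝ) ^ (m - k) = 1 := by
      rw [← pow_add, show k + (m - k) = m by omega, hm.neg_one_pow]
    have hchoose : (m.choose k : ℝ) * (k.factorial : ℝ) * ((m - k).factorial : ℝ)
        = (m.factorial : ℝ) := by
      exact_mod_cast congrArg (Nat.cast : ℕ → ℝ)
        (Nat.choose_mul_factorial_mul_factorial hkm)
    have hk0 : ((k.factorial : ℝ)) ≠ 0 := by positivity
    have hmk0 : (((m - k).factorial : ℝ)) ≠ 0 := by positivity
    rw [hprodneg, hGk]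
    have hdiv : (m.factorial : ℝ) / ((k.factorial : ℝ) * ((m - k).factorial : ℝ)) = (m.choose k : ℝ) := by
      rw [← hchoose, mul_assoc, mul_div_assoc, div_self (mul_ne_zero hk0 hmk0), mul_one]
    calc (m.factorial : ℝ) * Real.Gamma (B - m) * ((-1 : ℝ) ^ k / ((k.factorial : ℝ) * ((m - k).factorial : ℝ))
          * ((-1 : ℝ) ^ (m - k) * ∏ j ∈ Finset.Icc (k + 1) m, (B - (j : ℝ))) * (-z) ^ k)
        = ((m.factorial : ℝ) / ((k.factorial : ℝ) * ((m - k).factorial : ℝ))) * ((-1 : ℝ) ^ k * (-1 : ℝ) ^ (m - k))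
          * Real.Gamma (B - m) * (∏ j ∈ Finset.Icc (k + 1) m, (B - (j : ℝ))) * (-z) ^ k := by ring
      _ = _ := by rw [hdiv, hsign]; ring
  have hpos := key_sum_pos m hm B hB z hz
  nlinarith [key, hpos, mul_pos hfac hGam]

theorem morse_factorization_function_nonvanishing
    (m : ℕ) (hm : Even m) (A : ℝ) (hA : 0 < A) :
    (∀ z : ℝ, 0 ≤ z → genLaguerre m (-2 * (1 + (m : ℝ) + A)) (-z) ≠ 0) ∧
    (∀ x : ℝ, Real.exp (((m : ℝ) + A + 1) * x + Real.exp (-x) / 2)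
        * genLaguerre m (-2 * (1 + (m : ℝ) + A)) (-Real.exp (-x)) ≠ 0) := by
  have hB : (m : ℝ) + 1 < 2 * (1 + (m : ℝ) + A) := by
    have : (0 : ℝ) ≤ (m : ℝ) := Nat.cast_nonneg m
    linarith
  have hkey : ∀ z : ℝ, 0 ≤ z → genLaguerre m (-2 * (1 + (m : ℝ) + A)) (-z) ≠ 0 := by
    intro z hz
    have := genLaguerre_neg_pos m hm (2 * (1 + (m : ℝ) + A)) hB z hz
    rw [show -(2 * (1 + (m : ℝ) + A)) = -2 * (1 + (m : ℝ) + A) by ring] at this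
    exact this.ne'
  refine ⟨hkey, fun x => mul_ne_zero (Real.exp_ne_zero _) ?_⟩
  exact hkey _ (Real.exp_pos _).le
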